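/- Let f : ℝ^d → ℝ be twice continuously differentiable with L1-Lipschitz gradient and L2-Lipschitz Hessian, let α ∈ (0,1], ε₁ ∈ (0,1), ε₂ = ε₁^α, and let x₀ satisfy f(x₀) − inf f ≤ Δ < ∞. Suppose x₁ = x₀ and (v_j) are unit vectors such that for every j: (i) λ_min(∇²f(x_j)) ≥ v_jᵀ∇²f(x_j)v_j − max(ε₂, ‖∇f(x_j)‖^α)/2 and v_jᵀ∇²f(x_j)v_j ≤ 0; (ii) x_{j+1} = x_j − (2·|v_jᵀ∇²f(x_j)v_j|/L2)·sign(v_jᵀ∇f(x_j))·v_j if 2·|v_jᵀ∇²f(x_j)v_j|³/(3·L2²) > ‖∇f(x_j)‖²/(2·L1), and x_{j+1} = x_j − (1/L1)·∇f(x_j) otherwise. Then the first index j* such that v_{j*}ᵀ∇²f(x_{j*})v_{j*} > −ε₂/2 and ‖∇f(x_{j*})‖ ≤ ε₁ satisfies j* ≤ 1 + max(12·L2²/ε₁^{3α}, 2·L1/ε₁²)·Δ, and at termination ‖∇f(x_{j*})‖ ≤ ε₁ and λ_min(∇²f(x_{j*})) ≥ −ε₁^α. -/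

import Mathlib

open scoped RealInnerProductSpace

noncomputable def sgn (t : ℝ) : ℝ := if 0 ≤ t then 1 else -1

lemma sgn_mul_self (t : ℝ) : sgn t * t = |t| := by
  unfold sgn
  split
  · rw [one_mul, abs_of_nonneg ‹_›]
  · rw [abs_of_neg (lt_of_not_ge ‹_›)]; ring

lemma sgn_sq (t : ℝ) : sgn t * sgn t = 1 := by
  unfold sgn; split <;> norm_num

lemma abs_sgn (t : ℝ) : |sgn t| = 1 := by
  unfold sgn; split <;> norm_num

section Aux
variable {d : ℕ}
local notation "E" => EuclideanSpace ℝ (Fin d)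

lemma grad_inner (f : E → ℝ) (a w : E) :
    ⟪gradient f a, w⟫ = fderiv ℝ f a w :=
  InnerProductSpace.toDual_symm_apply

noncomputable def dualIso (d : ℕ) :
    StrongDual ℝ (EuclideanSpace ℝ (Fin d)) →L[ℝ] EuclideanSpace ℝ (Fin d) :=
  LinearMap.mkContinuous
    { toFun := (InnerProductSpace.toDual ℝ (EuclideanSpace ℝ (Fin d))).symm
      map_add' := map_add _
      map_smul' := fun c y => by
        simpa using (InnerProductSpace.toDual ℝ (EuclideanSpace ℝ (Fin d))).symm.map_smulₛₗ c y }
    1 (fun y => by simp)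

lemma gradient_differentiable (f : E → ℝ) (hf : ContDiff ℝ 2 f) :
    Differentiable ℝ (gradient f) := by
  have h1 : ContDiff ℝ 1 (fderiv ℝ f) := hf.fderiv_right (by norm_num)
  have h2 : Differentiable ℝ (fderiv ℝ f) := h1.differentiable one_ne_zero
  have h3 : gradient f = fun y => dualIso d (fderiv ℝ f y) := rfl
  rw [h3]
  exact (dualIso d).differentiable.comp h2

lemma path_hd (a w : E) (t : ℝ) : HasDerivAt (fun s : ℝ => a + s • w) w t := by
  simpa using ((hasDerivAt_id t).smul_const w).const_add a

lemma path_hasDerivAt (f : E → ℝ) (hf : ContDiff ℝ 2 f) (a w : E) (t : ℝ) :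
    HasDerivAt (fun s : ℝ => f (a + s • w)) ⟪gradient f (a + t • w), w⟫ t := by
  have hd := (hf.differentiable (by norm_num) (a + t • w)).hasFDerivAt
  have := hd.comp_hasDerivAt t (path_hd a w t)
  rw [grad_inner]
  exact this

lemma grad_path_hasDerivAt (f : E → ℝ) (hG : Differentiable ℝ (gradient f)) (a w : E) (t : ℝ) :
    HasDerivAt (fun s : ℝ => ⟪gradient f (a + s • w), w⟫)
      ⟪(fderiv ℝ (gradient f) (a + t • w)) w, w⟫ t := by
  have h1 : HasDerivAt (fun s : ℝ => gradient f (a + s • w))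
      ((fderiv ℝ (gradient f) (a + t • w)) w) t :=
    (hG (a + t • w)).hasFDerivAt.comp_hasDerivAt (l := gradient f) t (path_hd a w t)
  have h2 := (innerSL ℝ w).hasFDerivAt.comp_hasDerivAt t h1
  have he : (fun s : ℝ => ⟪gradient f (a + s • w), w⟫)
      = fun s : ℝ => (innerSL ℝ w) (gradient f (a + s • w)) := by
    funext s; rw [innerSL_apply_apply, real_inner_comm]
  rw [he, real_inner_comm, ← innerSL_apply_apply]
  exact h2

lemma descentA (f : E → ℝ) (hf : ContDiff ℝ 2 f) {L1 : ℝ}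
    (hglip : ∀ a b : E, ‖gradient f a - gradient f b‖ ≤ L1 * ‖a - b‖)
    (a w : E) :
    f (a + w) ≤ f a + ⟪gradient f a, w⟫ + L1 / 2 * ‖w‖ ^ 2 := by
  set g : ℝ → ℝ := fun t => ⟪gradient f (a + t • w), w⟫ with hg
  have hφ : ∀ t, HasDerivAt (fun s : ℝ => f (a + s • w)) (g t) t :=
    fun t => path_hasDerivAt f hf a w t
  set ψ : ℝ → ℝ := fun t => f (a + t • w) - g 0 * t - L1 * ‖w‖ ^ 2 / 2 * t ^ 2 with hψ
  have hψ' : ∀ t, HasDerivAt ψ (g t - g 0 - L1 * ‖w‖ ^ 2 * t) t := by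
    intro t
    have h1 := ((hφ t).sub ((hasDerivAt_id t).const_mul (g 0))).sub
      ((hasDerivAt_pow 2 t).const_mul (L1 * ‖w‖ ^ 2 / 2))
    exact h1.congr_deriv (by push_cast; ring)
  have hanti : AntitoneOn ψ (Set.Icc 0 1) := by
    apply antitoneOn_of_hasDerivWithinAt_nonpos (convex_Icc 0 1)
      (fun t _ => (hψ' t).continuousAt.continuousWithinAt)
      (fun t _ => (hψ' t).hasDerivWithinAt)
    intro t ht
    rw [interior_Icc] at ht
    have h1 : g t - g 0 = ⟪gradient f (a + t • w) - gradient f (a + (0:ℝ) • w), w⟫ := by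
      rw [inner_sub_left]
    have h2 : g t - g 0 ≤ L1 * ‖w‖ ^ 2 * t := by
      have h3 : ‖(a + t • w) - (a + (0:ℝ) • w)‖ = t * ‖w‖ := by
        simp [norm_smul, abs_of_pos ht.1]
      calc g t - g 0 ≤ ‖gradient f (a + t • w) - gradient f (a + (0:ℝ) • w)‖ * ‖w‖ := by
            rw [h1]; exact real_inner_le_norm _ _
        _ ≤ (L1 * (t * ‖w‖)) * ‖w‖ := by
            have h4 := hglip (a + t • w) (a + (0:ℝ) • w)
            rw [h3] at h4
            exact mul_le_mul_of_nonneg_right h4 (norm_nonneg w)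
        _ = L1 * ‖w‖ ^ 2 * t := by ring
    linarith
  have hfin := hanti (Set.left_mem_Icc.mpr one_pos.le)
    (Set.right_mem_Icc.mpr one_pos.le) one_pos.le
  have hg0 : g 0 = ⟪gradient f a, w⟫ := by simp [hg]
  simp only [hψ, one_smul, zero_smul, add_zero, mul_one, one_pow, mul_zero, zero_pow,
    sub_zero, pow_zero] at hfin
  rw [hg0] at hfin
  linarith

lemma descentB (f : E → ℝ) (hf : ContDiff ℝ 2 f) {L2 : ℝ}
    (hHlip : ∀ a b : E, ‖fderiv ℝ (gradient f) a - fderiv ℝ (gradient f) b‖ ≤ L2 * ‖a - b‖)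
    (a w : E) :
    f (a + w) ≤ f a + ⟪gradient f a, w⟫ + ⟪(fderiv ℝ (gradient f) a) w, w⟫ / 2
      + L2 / 6 * ‖w‖ ^ 3 := by
  have hG := gradient_differentiable f hf
  set g : ℝ → ℝ := fun t => ⟪gradient f (a + t • w), w⟫ with hgdef
  set h : ℝ → ℝ := fun t => ⟪(fderiv ℝ (gradient f) (a + t • w)) w, w⟫ with hhdef
  have hφ : ∀ t, HasDerivAt (fun s : ℝ => f (a + s • w)) (g t) t :=
    fun t => path_hasDerivAt f hf a w t
  have hg' : ∀ t, HasDerivAt g (h t) t := fun t => grad_path_hasDerivAt f hG a w t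
  have step1 : ∀ t ∈ Set.Icc (0:ℝ) 1, g t ≤ g 0 + h 0 * t + L2 * ‖w‖ ^ 3 / 2 * t ^ 2 := by
    set χ : ℝ → ℝ := fun t => g t - h 0 * t - L2 * ‖w‖ ^ 3 / 2 * t ^ 2 with hχdef
    have hχ' : ∀ t, HasDerivAt χ (h t - h 0 - L2 * ‖w‖ ^ 3 * t) t := by
      intro t
      have h1 := ((hg' t).sub ((hasDerivAt_id t).const_mul (h 0))).sub
        ((hasDerivAt_pow 2 t).const_mul (L2 * ‖w‖ ^ 3 / 2))
      exact h1.congr_deriv (by push_cast; ring)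
    have hanti : AntitoneOn χ (Set.Icc 0 1) := by
      apply antitoneOn_of_hasDerivWithinAt_nonpos (convex_Icc 0 1)
        (fun t _ => (hχ' t).continuousAt.continuousWithinAt)
        (fun t _ => (hχ' t).hasDerivWithinAt)
      intro t ht
      rw [interior_Icc] at ht
      have h1 : h t - h 0
          = ⟪(fderiv ℝ (gradient f) (a + t • w) - fderiv ℝ (gradient f) (a + (0:ℝ) • w)) w, w⟫ := by
        rw [ContinuousLinearMap.sub_apply, inner_sub_left]
      have h3 : ‖(a + t • w) - (a + (0:ℝ) • w)‖ = t * ‖w‖ := by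
        simp [norm_smul, abs_of_pos ht.1]
      have h2 : h t - h 0 ≤ L2 * ‖w‖ ^ 3 * t := by
        calc h t - h 0
            ≤ ‖(fderiv ℝ (gradient f) (a + t • w) - fderiv ℝ (gradient f) (a + (0:ℝ) • w)) w‖
              * ‖w‖ := by rw [h1]; exact real_inner_le_norm _ _
          _ ≤ (‖fderiv ℝ (gradient f) (a + t • w) - fderiv ℝ (gradient f) (a + (0:ℝ) • w)‖ * ‖w‖)
              * ‖w‖ := by
              exact mul_le_mul_of_nonneg_right
                ((fderiv ℝ (gradient f) (a + t • w)
                  - fderiv ℝ (gradient f) (a + (0:ℝ) • w)).le_opNorm w)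
                (norm_nonneg w)
          _ ≤ ((L2 * (t * ‖w‖)) * ‖w‖) * ‖w‖ := by
              have h4 := hHlip (a + t • w) (a + (0:ℝ) • w)
              rw [h3] at h4
              have h5 := mul_le_mul_of_nonneg_right h4 (norm_nonneg w)
              exact mul_le_mul_of_nonneg_right h5 (norm_nonneg w)
          _ = L2 * ‖w‖ ^ 3 * t := by ring
      linarith
    intro t ht
    have := hanti (Set.left_mem_Icc.mpr one_pos.le) ht ht.1
    simp only [hχdef, mul_zero, sub_zero, zero_pow, pow_zero] at this
    nlinarith [this]
  set ψ : ℝ → ℝ := fun t => f (a + t • w) - g 0 * t - h 0 / 2 * t ^ 2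
    - L2 * ‖w‖ ^ 3 / 6 * t ^ 3 with hψdef
  have hψ' : ∀ t, HasDerivAt ψ (g t - g 0 - h 0 * t - L2 * ‖w‖ ^ 3 / 2 * t ^ 2) t := by
    intro t
    have h1 := (((hφ t).sub ((hasDerivAt_id t).const_mul (g 0))).sub
      ((hasDerivAt_pow 2 t).const_mul (h 0 / 2))).sub
      ((hasDerivAt_pow 3 t).const_mul (L2 * ‖w‖ ^ 3 / 6))
    exact h1.congr_deriv (by push_cast; ring)
  have hanti : AntitoneOn ψ (Set.Icc 0 1) := by
    apply antitoneOn_of_hasDerivWithinAt_nonpos (convex_Icc 0 1)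
      (fun t _ => (hψ' t).continuousAt.continuousWithinAt)
      (fun t _ => (hψ' t).hasDerivWithinAt)
    intro t ht
    rw [interior_Icc] at ht
    have := step1 t (Set.mem_Icc.mpr ⟨ht.1.le, ht.2.le⟩)
    linarith
  have hfin := hanti (Set.left_mem_Icc.mpr one_pos.le)
    (Set.right_mem_Icc.mpr one_pos.le) one_pos.le
  have hg0 : g 0 = ⟪gradient f a, w⟫ := by simp [hgdef]
  have hh0 : h 0 = ⟪(fderiv ℝ (gradient f) a) w, w⟫ := by simp [hhdef]
  simp only [hψdef, one_smul, zero_smul, add_zero, mul_one, one_pow, mul_zero, zero_pow,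
    sub_zero, pow_zero] at hfin
  rw [hg0, hh0] at hfin
  linarith

end Aux

set_option maxHeartbeats 1000000 in
/-- Theorem on NCG-A2: convergence guarantee of the NCG-A2 algorithm,
where the noise level of each NCG step is `max(ε₂, ‖∇f(x_j)‖^α)/2` with `ε₂ = ε₁^α`. -/
theorem NCG_A2_guarantee {d : ℕ}
    (f : EuclideanSpace ℝ (Fin d) → ℝ) (L1 L2 α ε₁ ε₂ Δ : ℝ)
    (hL1 : 0 < L1) (hL2 : 0 < L2)
    (hα : 0 < α) (hα1 : α ≤ 1)
    (hε₁ : 0 < ε₁) (hε₁1 : ε₁ < 1)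
    (hε₂ : ε₂ = ε₁ ^ α)
    (hf : ContDiff ℝ 2 f)
    (hglip : ∀ a b : EuclideanSpace ℝ (Fin d),
      ‖gradient f a - gradient f b‖ ≤ L1 * ‖a - b‖)
    (hHlip : ∀ a b : EuclideanSpace ℝ (Fin d),
      ‖fderiv ℝ (gradient f) a - fderiv ℝ (gradient f) b‖ ≤ L2 * ‖a - b‖)
    (x₀ : EuclideanSpace ℝ (Fin d))
    (hΔ : ∀ z : EuclideanSpace ℝ (Fin d), f x₀ - f z ≤ Δ)
    (x v : ℕ → EuclideanSpace ℝ (Fin d))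
    (hx1 : x 1 = x₀)
    (hv : ∀ j : ℕ, 1 ≤ j → ‖v j‖ = 1)
    (hvneg : ∀ j : ℕ, 1 ≤ j → ⟪(fderiv ℝ (gradient f) (x j)) (v j), v j⟫ ≤ 0)
    (hmin : ∀ j : ℕ, 1 ≤ j → ∀ u : EuclideanSpace ℝ (Fin d), ‖u‖ = 1 →
      ⟪(fderiv ℝ (gradient f) (x j)) u, u⟫ ≥
        ⟪(fderiv ℝ (gradient f) (x j)) (v j), v j⟫ -
          max ε₂ (‖gradient f (x j)‖ ^ α) / 2)
    (hupd : ∀ j : ℕ, 1 ≤ j →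
      x (j + 1) =
        if 2 * |⟪(fderiv ℝ (gradient f) (x j)) (v j), v j⟫| ^ 3 / (3 * L2 ^ 2) >
            ‖gradient f (x j)‖ ^ 2 / (2 * L1) then
          x j - ((2 * |⟪(fderiv ℝ (gradient f) (x j)) (v j), v j⟫| / L2) *
            sgn ⟪gradient f (x j), v j⟫) • v j
        else
          x j - (1 / L1) • gradient f (x j)) :
    ∃ jstar : ℕ, 1 ≤ jstar ∧
      (⟪(fderiv ℝ (gradient f) (x jstar)) (v jstar), v jstar⟫ > -ε₂ / 2 ∧
        ‖gradient f (x jstar)‖ ≤ ε₁) ∧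
      (∀ i : ℕ, 1 ≤ i → i < jstar →
        ¬(⟪(fderiv ℝ (gradient f) (x i)) (v i), v i⟫ > -ε₂ / 2 ∧
          ‖gradient f (x i)‖ ≤ ε₁)) ∧
      (jstar : ℝ) ≤ 1 + max (12 * L2 ^ 2 / ε₁ ^ (3 * α)) (2 * L1 / ε₁ ^ 2) * Δ ∧
      ∀ u : EuclideanSpace ℝ (Fin d), ‖u‖ = 1 →
        ⟪(fderiv ℝ (gradient f) (x jstar)) u, u⟫ ≥ -(ε₁ ^ α) := by
  classical
  have hε₂pos : 0 < ε₂ := hε₂ ▸ Real.rpow_pos_of_pos hε₁ α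
  have hε13α : 0 < ε₁ ^ (3 * α) := Real.rpow_pos_of_pos hε₁ _
  have hε₂3 : ε₁ ^ (3 * α) = ε₂ ^ 3 := by
    rw [hε₂, ← Real.rpow_natCast (ε₁ ^ α) 3, ← Real.rpow_mul hε₁.le]
    norm_num [mul_comm]
  set δ : ℝ := min (ε₁ ^ (3 * α) / (12 * L2 ^ 2)) (ε₁ ^ 2 / (2 * L1)) with hδdef
  have hδpos : 0 < δ := lt_min (by positivity) (by positivity)
  have hΔ0 : 0 ≤ Δ := by have := hΔ x₀; linarith
  -- per-step decrease
  have hdec : ∀ j : ℕ, 1 ≤ j →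
      (⟪(fderiv ℝ (gradient f) (x j)) (v j), v j⟫ ≤ -ε₂ / 2 ∨ ε₁ < ‖gradient f (x j)‖) →
      f (x (j + 1)) + δ ≤ f (x j) := by
    intro j hj hnp
    have hup := hupd j hj
    set q := ⟪(fderiv ℝ (gradient f) (x j)) (v j), v j⟫ with hqdef
    set g := gradient f (x j) with hgdef
    clear_value q g
    have hqn : q ≤ 0 := by rw [hqdef]; exact hvneg j hj
    have habs : |q| = -q := abs_of_nonpos hqn
    have hA0 : (0:ℝ) ≤ -q := neg_nonneg.mpr hqn
    have hvn : ‖v j‖ = 1 := hv j hj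
    by_cases hbr : 2 * |q| ^ 3 / (3 * L2 ^ 2) > ‖g‖ ^ 2 / (2 * L1)
    · rw [hup, if_pos hbr]
      rw [habs] at hbr ⊢
      set σ := sgn ⟪g, v j⟫ with hσdef
      set c : ℝ := 2 * (-q) / L2 * σ with hcdef
      rw [sub_eq_add_neg, ← neg_smul]
      have hB := descentB f hf hHlip (x j) ((-c) • v j)
      rw [← hgdef] at hB
      have hiw : ⟪g, (-c) • v j⟫ = (-c) * ⟪g, v j⟫ := real_inner_smul_right _ _ _
      have hHw : ⟪(fderiv ℝ (gradient f) (x j)) ((-c) • v j), (-c) • v j⟫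
          = (c * c) * q := by
        rw [map_smul, real_inner_smul_left, real_inner_smul_right, ← hqdef]; ring
      have hnw : ‖(-c) • v j‖ = 2 * (-q) / L2 := by
        rw [norm_smul, hvn, mul_one, Real.norm_eq_abs, abs_neg, hcdef, abs_mul, abs_sgn,
          mul_one, abs_of_nonneg (by positivity)]
      rw [hiw, hHw, hnw] at hB
      have hσq : σ * ⟪g, v j⟫ = |⟪g, v j⟫| := sgn_mul_self _
      have hσσ : σ * σ = 1 := sgn_sq _
      have e1 : (-c) * ⟪g, v j⟫ = -(2 * (-q) / L2) * |⟪g, v j⟫| := by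
        rw [← hσq, hcdef]; ring
      have e2 : c * c = (2 * (-q) / L2) ^ 2 := by
        rw [hcdef, show 2 * (-q) / L2 * σ * (2 * (-q) / L2 * σ)
          = (2 * (-q) / L2) ^ 2 * (σ * σ) from by ring, hσσ, mul_one]
      rw [e1, e2] at hB
      have hterm : (2 * (-q) / L2) ^ 2 * q / 2 + L2 / 6 * (2 * (-q) / L2) ^ 3
          = -(2 * (-q) ^ 3 / (3 * L2 ^ 2)) := by
        field_simp
        ring
      have hfirst : 0 ≤ 2 * (-q) / L2 * |⟪g, v j⟫| := by positivity
      have key : f (x j + (-c) • v j) ≤ f (x j) - 2 * (-q) ^ 3 / (3 * L2 ^ 2) := by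
        linarith [hB, hterm, hfirst]
      have hδle : δ ≤ 2 * (-q) ^ 3 / (3 * L2 ^ 2) := by
        rcases hnp with hql | hgl
        · have h1 : δ ≤ ε₁ ^ (3 * α) / (12 * L2 ^ 2) := min_le_left _ _
          rw [hε₂3] at h1
          have h2 : ε₂ / 2 ≤ -q := by linarith
          have h3 : (ε₂ / 2) ^ 3 ≤ (-q) ^ 3 :=
            pow_le_pow_left₀ (by positivity) h2 3
          have hL2sq : (0:ℝ) < L2 ^ 2 := by positivity
          have h4 : ε₂ ^ 3 / (12 * L2 ^ 2) ≤ 2 * (-q) ^ 3 / (3 * L2 ^ 2) := by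
            rw [div_le_div_iff₀ (by positivity) (by positivity)]
            nlinarith [h3]
          linarith
        · have h1 : δ ≤ ε₁ ^ 2 / (2 * L1) := min_le_right _ _
          have h2 : ε₁ ^ 2 ≤ ‖g‖ ^ 2 := pow_le_pow_left₀ hε₁.le hgl.le 2
          have h3 : ε₁ ^ 2 / (2 * L1) ≤ ‖g‖ ^ 2 / (2 * L1) :=
            div_le_div_of_nonneg_right h2 (by positivity)
          linarith
      linarith
    · rw [hup, if_neg hbr]
      push_neg at hbr
      rw [habs] at hbr
      rw [sub_eq_add_neg, ← neg_smul]
      have hA := descentA f hf hglip (x j) ((-(1 / L1)) • g)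
      rw [← hgdef] at hA
      have hiw : ⟪g, (-(1 / L1)) • g⟫ = -(1 / L1) * ‖g‖ ^ 2 := by
        rw [real_inner_smul_right, real_inner_self_eq_norm_sq]
      have hnw : ‖(-(1 / L1)) • g‖ ^ 2 = (1 / L1) ^ 2 * ‖g‖ ^ 2 := by
        rw [norm_smul, Real.norm_eq_abs, abs_neg, abs_of_nonneg (by positivity : (0:ℝ) ≤ 1 / L1)]
        ring
      rw [hiw, hnw] at hA
      have key : f (x j + (-(1 / L1)) • g) ≤ f (x j) - ‖g‖ ^ 2 / (2 * L1) := by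
        have : -(1 / L1) * ‖g‖ ^ 2 + L1 / 2 * ((1 / L1) ^ 2 * ‖g‖ ^ 2)
            = -(‖g‖ ^ 2 / (2 * L1)) := by field_simp; ring
        linarith
      have hδle : δ ≤ ‖g‖ ^ 2 / (2 * L1) := by
        rcases hnp with hql | hgl
        · have h1 : δ ≤ ε₁ ^ (3 * α) / (12 * L2 ^ 2) := min_le_left _ _
          rw [hε₂3] at h1
          have h2 : ε₂ / 2 ≤ -q := by linarith
          have h3 : (ε₂ / 2) ^ 3 ≤ (-q) ^ 3 :=
            pow_le_pow_left₀ (by positivity) h2 3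
          have h4 : ε₂ ^ 3 / (12 * L2 ^ 2) ≤ 2 * (-q) ^ 3 / (3 * L2 ^ 2) := by
            rw [div_le_div_iff₀ (by positivity) (by positivity)]
            nlinarith [h3]
          linarith
        · have h2 : ε₁ ^ 2 ≤ ‖g‖ ^ 2 := pow_le_pow_left₀ hε₁.le hgl.le 2
          have h3 : ε₁ ^ 2 / (2 * L1) ≤ ‖g‖ ^ 2 / (2 * L1) :=
            div_le_div_of_nonneg_right h2 (by positivity)
          exact (min_le_right _ _).trans h3
      linarith
  -- terminal predicate
  set P : ℕ → Prop := fun j =>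
    ⟪(fderiv ℝ (gradient f) (x j)) (v j), v j⟫ > -ε₂ / 2 ∧ ‖gradient f (x j)‖ ≤ ε₁
    with hPdef
  have hnotP : ∀ j : ℕ, 1 ≤ j → ¬ P j →
      (⟪(fderiv ℝ (gradient f) (x j)) (v j), v j⟫ ≤ -ε₂ / 2 ∨ ε₁ < ‖gradient f (x j)‖) := by
    intro j hj hP
    by_cases h1 : ⟪(fderiv ℝ (gradient f) (x j)) (v j), v j⟫ ≤ -ε₂ / 2
    · exact Or.inl h1
    · push_neg at h1
      right
      by_contra h2
      push_neg at h2
      exact hP ⟨h1, h2⟩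
  -- telescoping
  have htel : ∀ N : ℕ, (∀ i : ℕ, 1 ≤ i → i ≤ N → ¬ P i) →
      f (x (N + 1)) + (N : ℝ) * δ ≤ f (x 1) := by
    intro N
    induction N with
    | zero => intro _; simp
    | succ n ih =>
      intro hall
      have h1 := ih (fun i hi1 hi2 => hall i hi1 (hi2.trans (Nat.le_succ n)))
      have h2 := hdec (n + 1) (by omega)
        (hnotP (n + 1) (by omega) (hall (n + 1) (by omega) le_rfl))
      push_cast
      push_cast at h1
      linarith
  have hbound : ∀ N : ℕ, (∀ i : ℕ, 1 ≤ i → i ≤ N → ¬ P i) → (N : ℝ) * δ ≤ Δ := by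
    intro N hall
    have h1 := htel N hall
    have h2 := hΔ (x (N + 1))
    rw [hx1] at h1
    linarith
  have hex : ∃ j : ℕ, 1 ≤ j ∧ P j := by
    by_contra hno
    push_neg at hno
    obtain ⟨N, hN⟩ := exists_nat_gt (Δ / δ)
    have h1 := hbound N (fun i hi _ => hno i hi)
    rw [div_lt_iff₀ hδpos] at hN
    linarith
  refine ⟨Nat.find hex, (Nat.find_spec hex).1, (Nat.find_spec hex).2, ?_, ?_, ?_⟩
  · intro i hi1 hi2
    have := Nat.find_min hex hi2
    intro hPi
    exact this ⟨hi1, hPi⟩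
  · -- the bound
    set jstar := Nat.find hex with hjdef
    have hj1 : 1 ≤ jstar := (Nat.find_spec hex).1
    have hall : ∀ i : ℕ, 1 ≤ i → i ≤ jstar - 1 → ¬ P i := by
      intro i hi1 hi2 hPi
      exact Nat.find_min hex (by omega) ⟨hi1, hPi⟩
    have h1 := hbound (jstar - 1) hall
    have hcast : ((jstar - 1 : ℕ) : ℝ) = (jstar : ℝ) - 1 := by
      rw [Nat.cast_sub hj1]; norm_num
    rw [hcast] at h1
    -- now (jstar - 1) * δ ≤ Δ
    have hM1 : (0:ℝ) < ε₁ ^ (3 * α) / (12 * L2 ^ 2) := by positivity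
    have hM2 : (0:ℝ) < ε₁ ^ 2 / (2 * L1) := by positivity
    have hkey : (jstar : ℝ) - 1 ≤ max (12 * L2 ^ 2 / ε₁ ^ (3 * α)) (2 * L1 / ε₁ ^ 2) * Δ := by
      rcases min_cases (ε₁ ^ (3 * α) / (12 * L2 ^ 2)) (ε₁ ^ 2 / (2 * L1)) with
        ⟨hmeq, _⟩ | ⟨hmeq, _⟩
      · have hδeq : δ = ε₁ ^ (3 * α) / (12 * L2 ^ 2) := hmeq
        have h2 : (jstar : ℝ) - 1 ≤ Δ / (ε₁ ^ (3 * α) / (12 * L2 ^ 2)) := by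
          rw [le_div_iff₀ hM1]
          rw [hδeq] at h1
          linarith
        have h3 : Δ / (ε₁ ^ (3 * α) / (12 * L2 ^ 2))
            = 12 * L2 ^ 2 / ε₁ ^ (3 * α) * Δ := by
          field_simp
        rw [h3] at h2
        exact h2.trans (mul_le_mul_of_nonneg_right (le_max_left _ _) hΔ0)
      · have hδeq : δ = ε₁ ^ 2 / (2 * L1) := hmeq
        have h2 : (jstar : ℝ) - 1 ≤ Δ / (ε₁ ^ 2 / (2 * L1)) := by
          rw [le_div_iff₀ hM2]
          rw [hδeq] at h1
          linarith
        have h3 : Δ / (ε₁ ^ 2 / (2 * L1)) = 2 * L1 / ε₁ ^ 2 * Δ := by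
          field_simp
        rw [h3] at h2
        exact h2.trans (mul_le_mul_of_nonneg_right (le_max_right _ _) hΔ0)
    linarith
  · -- final Hessian bound
    intro u hu
    set jstar := Nat.find hex with hjdef
    have hj1 : 1 ≤ jstar := (Nat.find_spec hex).1
    obtain ⟨hq, hg⟩ := (Nat.find_spec hex).2
    have h1 := hmin jstar hj1 u hu
    have h2 : ‖gradient f (x jstar)‖ ^ α ≤ ε₂ := by
      rw [hε₂]
      exact Real.rpow_le_rpow (norm_nonneg _) hg hα.le
    have h3 : max ε₂ (‖gradient f (x jstar)‖ ^ α) = ε₂ := max_eq_left h2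
    rw [h3] at h1
    rw [← hε₂]
    linarith
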